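/- Let K be a field, 1 ≤ k < m, and let I, J ⊆ {1,…,m} with |I| = |J| = k. Let P := K[x_{ij} : (i,j) ∈ S_{I,J}] be the polynomial ring in the k(2m−k) variables indexed by S_{I,J} = {(i,j) : i ∈ I or j ∈ J}, regarded as a subring of R = K[x_{ij} : 1 ≤ i,j ≤ m]; note that the minor Δ_{I,J} lies in P. Then the composite K-algebra homomorphism P ↪ R → R_k = R/I_{k+1} induces an isomorphism from the localization of P at Δ_{I,J} onto the localization of R_k at the image of Δ_{I,J}. (In particular, the open set D(Δ_{I,J}) of the determinantal variety D^k = Spec R_k is smooth, and these open sets cover the complement of V(I_k), the smooth locus of D^k.) -/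

import Mathlib

open MvPolynomial

/-- The `r × r` minor `Δ_{A,B}` of the generic `m × m` matrix `(x_{ij})`. -/
noncomputable def genMinor (K : Type*) [Field K] (m r : ℕ) (A B : Finset (Fin m))
    (hA : A.card = r) (hB : B.card = r) : MvPolynomial (Fin m × Fin m) K :=
  (Matrix.of fun a b : Fin r =>
    (X ((↑(A.orderIsoOfFin hA a) : Fin m), (↑(B.orderIsoOfFin hB b) : Fin m)) :
      MvPolynomial (Fin m × Fin m) K)).det

/-- The determinantal ideal `I_r`, generated by all `r × r` minors of the generic matrix. -/
noncomputable def detIdeal (K : Type*) [Field K] (m r : ℕ) :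
    Ideal (MvPolynomial (Fin m × Fin m) K) :=
  Ideal.span {p | ∃ (A B : Finset (Fin m)) (hA : A.card = r) (hB : B.card = r),
    p = genMinor K m r A B hA hB}

/-- The determinantal ring `R_k = R / I_{k+1}`. -/
noncomputable abbrev DetRing (K : Type*) [Field K] (m k : ℕ) :=
  MvPolynomial (Fin m × Fin m) K ⧸ detIdeal K m (k + 1)

/-- The index set `S_{I,J} = {(i,j) : i ∈ I or j ∈ J}`, as a type. -/
def SIJ (m : ℕ) (I J : Finset (Fin m)) : Type :=
  {p : Fin m × Fin m // p.1 ∈ I ∨ p.2 ∈ J}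

/-- The polynomial ring `P = K[x_{ij} : (i,j) ∈ S_{I,J}]`, mapped into `R = K[x_{ij}]` by
sending variables to variables, composed with the projection `R → R_k`. -/
noncomputable def inclHom (K : Type*) [Field K] (m k : ℕ) (I J : Finset (Fin m)) :
    MvPolynomial (SIJ m I J) K →+* DetRing K m k :=
  (Ideal.Quotient.mk (detIdeal K m (k + 1))).comp
    (MvPolynomial.rename (fun p : SIJ m I J => p.val)).toRingHom

/-- The minor `Δ_{I,J}` regarded as an element of `P = K[x_{ij} : (i,j) ∈ S_{I,J}]`
(all of its variables satisfy `i ∈ I`). -/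
noncomputable def minorP (K : Type*) [Field K] (m k : ℕ) (I J : Finset (Fin m))
    (hI : I.card = k) (hJ : J.card = k) : MvPolynomial (SIJ m I J) K :=
  (Matrix.of fun a b : Fin k =>
    (X (⟨((↑(I.orderIsoOfFin hI a) : Fin m), (↑(J.orderIsoOfFin hJ b) : Fin m)),
        Or.inl (Finset.coe_mem _)⟩ : SIJ m I J) :
      MvPolynomial (SIJ m I J) K)).det


private lemma entry_inv_mul_det {L : Type*} [CommRing L] {m k : ℕ}
    (B : Matrix (Fin m) (Fin k) L) (A : Matrix (Fin k) (Fin k) L) (C : Matrix (Fin k) (Fin m) L)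
    (i j : Fin m) (hu : IsUnit A.det) :
    (B * A⁻¹ * C) i j * A.det = (B * A.adjugate * C) i j := by
  rw [Matrix.inv_def, Matrix.mul_smul, Matrix.smul_mul, Matrix.smul_apply, smul_eq_mul]
  calc Ring.inverse A.det * ((B * A.adjugate * C) i j) * A.det
      = (B * A.adjugate * C) i j * (Ring.inverse A.det * A.det) := by ring
    _ = (B * A.adjugate * C) i j := by
        rw [Ring.inverse_mul_cancel _ hu, mul_one]

private lemma row_in_span {R : Type*} [CommRing R] {k m : ℕ}
    (B : Matrix (Fin m) (Fin k) R) (A : Matrix (Fin k) (Fin k) R) (C : Matrix (Fin k) (Fin m) R)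
    (i : Fin m) (t : Fin k) (hrow : ∀ b, B i b = A t b) (j : Fin m) :
    (B * A.adjugate * C) i j = A.det * C t j := by
  rw [Matrix.mul_apply]
  have h2 : ∀ a, (B * A.adjugate) i a = (A.det • (1 : Matrix (Fin k) (Fin k) R)) t a := by
    intro a
    rw [← Matrix.mul_adjugate, Matrix.mul_apply, Matrix.mul_apply]
    exact Finset.sum_congr rfl fun b _ => by rw [hrow b]
  calc ∑ a, (B * A.adjugate) i a * C a j
      = ∑ a, (A.det • (1 : Matrix (Fin k) (Fin k) R)) t a * C a j :=
        Finset.sum_congr rfl fun a _ => by rw [h2 a]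
    _ = ((A.det • (1 : Matrix (Fin k) (Fin k) R)) * C) t j := (Matrix.mul_apply).symm
    _ = A.det * C t j := by rw [Matrix.smul_mul, Matrix.one_mul, Matrix.smul_apply, smul_eq_mul]

private lemma col_in_span {R : Type*} [CommRing R] {k m : ℕ}
    (B : Matrix (Fin m) (Fin k) R) (A : Matrix (Fin k) (Fin k) R) (C : Matrix (Fin k) (Fin m) R)
    (j : Fin m) (s : Fin k) (hcol : ∀ a, C a j = A a s) (i : Fin m) :
    (B * A.adjugate * C) i j = A.det * B i s := by
  rw [Matrix.mul_assoc, Matrix.mul_apply]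
  have h2 : ∀ b, (A.adjugate * C) b j = (A.det • (1 : Matrix (Fin k) (Fin k) R)) b s := by
    intro b
    rw [← Matrix.adjugate_mul, Matrix.mul_apply, Matrix.mul_apply]
    exact Finset.sum_congr rfl fun a _ => by rw [hcol a]
  calc ∑ b, B i b * (A.adjugate * C) b j
      = ∑ b, B i b * (A.det • (1 : Matrix (Fin k) (Fin k) R)) b s :=
        Finset.sum_congr rfl fun b _ => by rw [h2 b]
    _ = (B * (A.det • (1 : Matrix (Fin k) (Fin k) R))) i s := (Matrix.mul_apply).symm
    _ = A.det * B i s := by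
        rw [Matrix.mul_smul, Matrix.mul_one, Matrix.smul_apply, smul_eq_mul, mul_comm]

private lemma entry_as_one_by_one {R : Type*} [CommRing R] {k m : ℕ}
    (B : Matrix (Fin m) (Fin k) R) (A : Matrix (Fin k) (Fin k) R) (C : Matrix (Fin k) (Fin m) R)
    (i j : Fin m) :
    (B * A * C) i j = ((Matrix.of fun (_ : Fin 1) b => B i b) * A *
      (Matrix.of fun a (_ : Fin 1) => C a j) : Matrix (Fin 1) (Fin 1) R) 0 0 := by
  rw [Matrix.mul_apply, Matrix.mul_apply]
  refine Finset.sum_congr rfl fun a _ => ?_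
  congr 1

private lemma bordered_det_field {F : Type*} [Field F] {k : ℕ}
    (A : Matrix (Fin k) (Fin k) F) (Bc : Matrix (Fin k) (Fin 1) F)
    (Cr : Matrix (Fin 1) (Fin k) F) (x : F) (hA : A.det ≠ 0) :
    (Matrix.fromBlocks A Bc Cr (Matrix.of fun _ _ => x)).det
      = x * A.det - (Cr * A.adjugate * Bc) 0 0 := by
  haveI : Invertible A := A.invertibleOfIsUnitDet (isUnit_iff_ne_zero.mpr hA)
  rw [Matrix.det_fromBlocks₁₁, Matrix.invOf_eq_nonsing_inv, Matrix.inv_def,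
    Matrix.det_fin_one, Matrix.sub_apply, Matrix.mul_smul, Matrix.smul_mul,
    Matrix.smul_apply, smul_eq_mul]
  have h0 : (Matrix.of fun _ _ => x : Matrix (Fin 1) (Fin 1) F) 0 0 = x := rfl
  rw [h0, mul_sub, ← mul_assoc, Ring.mul_inverse_cancel _ (isUnit_iff_ne_zero.mpr hA),
    one_mul, mul_comm A.det x]

private lemma bordered_det_domain {R : Type*} [CommRing R] [IsDomain R] {k : ℕ}
    (A : Matrix (Fin k) (Fin k) R) (Bc : Matrix (Fin k) (Fin 1) R)
    (Cr : Matrix (Fin 1) (Fin k) R) (x : R) (hA : A.det ≠ 0) :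
    (Matrix.fromBlocks A Bc Cr (Matrix.of fun _ _ => x)).det
      = x * A.det - (Cr * A.adjugate * Bc) 0 0 := by
  have hinj : Function.Injective (algebraMap R (FractionRing R)) :=
    IsFractionRing.injective _ _
  set ι := algebraMap R (FractionRing R) with hι
  apply hinj
  rw [map_sub, map_mul, RingHom.map_det]
  have hdet' : (A.map ι).det = ι A.det := (RingHom.map_det ι A).symm
  have hA' : (A.map ι).det ≠ 0 := by
    rw [hdet']
    intro h
    exact hA (hinj (h.trans (map_zero ι).symm))
  have hfb : (RingHom.mapMatrix ι) (Matrix.fromBlocks A Bc Cr (Matrix.of fun _ _ => x))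
      = Matrix.fromBlocks (A.map ι) (Bc.map ι) (Cr.map ι)
          (Matrix.of fun _ _ => ι x) := by
    show (Matrix.fromBlocks A Bc Cr (Matrix.of fun _ _ => x)).map ι = _
    rw [Matrix.fromBlocks_map]
    rfl
  have hadj : (A.map ι).adjugate = A.adjugate.map ι := by
    calc (A.map ι).adjugate = ((RingHom.mapMatrix ι) A).adjugate := rfl
      _ = (RingHom.mapMatrix ι) A.adjugate := (RingHom.map_adjugate ι A).symm
      _ = A.adjugate.map ι := rfl
  rw [RingHom.map_det, hfb, bordered_det_field (A.map ι) (Bc.map ι) (Cr.map ι) (ι x) hA']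
  congr 1
  rw [hadj, ← Matrix.map_mul, ← Matrix.map_mul]
  rfl

private lemma det_rect_mul_zero {S : Type*} [CommRing S] {k : ℕ}
    (U : Matrix (Fin (k+1)) (Fin k) S) (V : Matrix (Fin k) (Fin (k+1)) S) :
    (U * V).det = 0 := by
  classical
  let U' : Matrix (Fin (k+1)) (Fin (k+1)) S :=
    Matrix.of fun i j => if h : (j : ℕ) < k then U i ⟨j, h⟩ else 0
  let V' : Matrix (Fin (k+1)) (Fin (k+1)) S :=
    Matrix.of fun i j => if h : (i : ℕ) < k then V ⟨i, h⟩ j else 0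
  have hUV : U * V = U' * V' := by
    ext i j
    rw [Matrix.mul_apply, Matrix.mul_apply, Fin.sum_univ_castSucc]
    have hlast : U' i (Fin.last k) * V' (Fin.last k) j = 0 := by
      simp [U', V']
    rw [hlast, add_zero]
    refine Finset.sum_congr rfl fun b _ => ?_
    have hb : ((Fin.castSucc b : Fin (k+1)) : ℕ) < k := b.isLt
    simp [U', V', dif_pos hb]
  rw [hUV, Matrix.det_mul]
  have h0 : U'.det = 0 :=
    Matrix.det_eq_zero_of_column_eq_zero (Fin.last k) (fun i => by simp [U'])
  rw [h0, zero_mul]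

private lemma exists_reindex {m r : ℕ} {α : Type*} [Fintype α] [DecidableEq α]
    (hcard : Fintype.card α = r) (s : Finset (Fin m)) (hs : s.card = r)
    (u : α → Fin m) (hu : Function.Injective u) (hmem : ∀ a, u a ∈ s) :
    ∃ e : α ≃ Fin r, ∀ a, (s.orderIsoOfFin hs (e a) : Fin m) = u a := by
  let v : α → Fin r := fun a => (s.orderIsoOfFin hs).symm ⟨u a, hmem a⟩
  have hv : Function.Injective v := fun a b h => hu (by
    have := congrArg (fun t => ((s.orderIsoOfFin hs t : _) : Fin m)) h
    simpa [v] using this)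
  have hbij : Function.Bijective v :=
    (Fintype.bijective_iff_injective_and_card v).mpr ⟨hv, by simp [hcard]⟩
  exact ⟨Equiv.ofBijective v hbij, fun a => by simp [v, Equiv.ofBijective]⟩

set_option maxHeartbeats 1000000 in
set_option synthInstance.maxHeartbeats 400000 in
/-- the composite `P → R → R_k` induces an isomorphism from the
localization of `P` at `Δ_{I,J}` onto the localization of `R_k` at the image of
`Δ_{I,J}`. -/
theorem statement12 (K : Type*) [Field K] (m k : ℕ) (hk : 1 ≤ k) (hkm : k < m)
    (I J : Finset (Fin m)) (hI : I.card = k) (hJ : J.card = k) :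
    Function.Bijective
      (IsLocalization.Away.map
        (Localization.Away (minorP K m k I J hI hJ))
        (Localization.Away (inclHom K m k I J (minorP K m k I J hI hJ)))
        (inclHom K m k I J) (minorP K m k I J hI hJ)) := by
  classical
  set Δ := minorP K m k I J hI hJ with hΔdef
  set g := inclHom K m k I J with hgdef
  set f := IsLocalization.Away.map (Localization.Away Δ) (Localization.Away (g Δ)) g Δ with hfdef
  -- row/column index functions
  set rI : Fin k → Fin m := fun a => ↑(I.orderIsoOfFin hI a) with hrI
  set cJ : Fin k → Fin m := fun b => ↑(J.orderIsoOfFin hJ b) with hcJ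
  have hrImem : ∀ a, rI a ∈ I := fun a => (I.orderIsoOfFin hI a).2
  have hcJmem : ∀ b, cJ b ∈ J := fun b => (J.orderIsoOfFin hJ b).2
  have hrIinj : Function.Injective rI := fun a b h =>
    (I.orderIsoOfFin hI).injective (Subtype.ext h)
  have hcJinj : Function.Injective cJ := fun a b h =>
    (J.orderIsoOfFin hJ).injective (Subtype.ext h)
  -- matrices over P
  set AP : Matrix (Fin k) (Fin k) (MvPolynomial (SIJ m I J) K) :=
    Matrix.of fun a b => X ⟨(rI a, cJ b), Or.inl (hrImem a)⟩ with hAPd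
  set BP : Matrix (Fin m) (Fin k) (MvPolynomial (SIJ m I J) K) :=
    Matrix.of fun i b => X ⟨(i, cJ b), Or.inr (hcJmem b)⟩ with hBPd
  set CP : Matrix (Fin k) (Fin m) (MvPolynomial (SIJ m I J) K) :=
    Matrix.of fun a j => X ⟨(rI a, j), Or.inl (hrImem a)⟩ with hCPd
  have hΔAP : Δ = AP.det := rfl
  -- matrices over R
  set AR : Matrix (Fin k) (Fin k) (MvPolynomial (Fin m × Fin m) K) :=
    Matrix.of fun a b => X (rI a, cJ b) with hARd
  set BR : Matrix (Fin m) (Fin k) (MvPolynomial (Fin m × Fin m) K) :=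
    Matrix.of fun i b => X (i, cJ b) with hBRd
  set CR : Matrix (Fin k) (Fin m) (MvPolynomial (Fin m × Fin m) K) :=
    Matrix.of fun a j => X (rI a, j) with hCRd
  set ΔR := AR.det with hΔRd
  set NR : Matrix (Fin m) (Fin m) (MvPolynomial (Fin m × Fin m) K) :=
    BR * AR.adjugate * CR with hNRd
  set mkq := Ideal.Quotient.mk (detIdeal K m (k+1)) with hmkqd
  set ρ : MvPolynomial (SIJ m I J) K →+* MvPolynomial (Fin m × Fin m) K :=
    (MvPolynomial.rename (fun p : SIJ m I J => p.val)).toRingHom with hρd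
  have hgmk : ∀ q : MvPolynomial (SIJ m I J) K, g q = mkq (ρ q) := fun q => rfl
  have hAPmap : AP.map ρ = AR := by
    refine Matrix.ext fun a b => ?_
    show ρ (X _) = X _
    exact rename_X _ _
  have hBPmap : BP.map ρ = BR := by
    refine Matrix.ext fun a b => ?_
    show ρ (X _) = X _
    exact rename_X _ _
  have hCPmap : CP.map ρ = CR := by
    refine Matrix.ext fun a b => ?_
    show ρ (X _) = X _
    exact rename_X _ _
  have hρdet : ∀ (M : Matrix (Fin k) (Fin k) (MvPolynomial (SIJ m I J) K)),
      ρ M.det = (M.map ρ).det := fun M => by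
    rw [RingHom.map_det]; rfl
  have hgΔ : g Δ = mkq ΔR := by
    rw [hgmk, hΔAP, hΔRd]
    congr 1
    rw [hρdet, hAPmap]
  -- localization side
  set aP := algebraMap (MvPolynomial (SIJ m I J) K) (Localization.Away Δ) with haPd
  set aQ := algebraMap (DetRing K m k) (Localization.Away (g Δ)) with haQd
  set AL := AP.map aP with hALd
  set BL := BP.map aP with hBLd
  set CL := CP.map aP with hCLd
  have hdetAL : AL.det = aP Δ := by
    rw [hALd, congrArg aP hΔAP, RingHom.map_det]; rfl
  have hALunit : IsUnit AL.det := by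
    rw [hdetAL]; exact IsLocalization.Away.algebraMap_isUnit Δ
  haveI : Invertible AL := AL.invertibleOfIsUnitDet hALunit
  set ML : Matrix (Fin m) (Fin m) (Localization.Away Δ) := BL * AL⁻¹ * CL with hMLd
  set φ : MvPolynomial (Fin m × Fin m) K →+* Localization.Away Δ :=
    eval₂Hom (aP.comp MvPolynomial.C) (fun p => ML p.1 p.2) with hφd
  have hφX : ∀ p : Fin m × Fin m, φ (X p) = ML p.1 p.2 := fun p => eval₂Hom_X' _ _ _
  have hφC : ∀ a : K, φ (MvPolynomial.C a) = aP (MvPolynomial.C a) := fun a =>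
    eval₂Hom_C _ _ _
  -- agreement of ML with the variables of P on S_{I,J}
  have hMS : ∀ p : SIJ m I J, ML p.1.1 p.1.2 = aP (X p) := by
    rintro ⟨⟨i, j⟩, hp | hp⟩
    · obtain ⟨t, ht⟩ : ∃ t, rI t = i :=
        ⟨(I.orderIsoOfFin hI).symm ⟨i, hp⟩, by
          show ((I.orderIsoOfFin hI) ((I.orderIsoOfFin hI).symm ⟨i, hp⟩) : Fin m) = i
          rw [OrderIso.apply_symm_apply]⟩
      have hBrow : ∀ b, BL i b = AL t b := by
        intro b
        show aP (X ⟨(i, cJ b), _⟩) = aP (X ⟨(rI t, cJ b), _⟩)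
        exact congrArg aP (congrArg X (Subtype.ext
          (show (i, cJ b) = (rI t, cJ b) by rw [ht])))
      have hrow1 : ∀ a, (BL * AL⁻¹) i a = (1 : Matrix (Fin k) (Fin k) (Localization.Away Δ)) t a := by
        intro a
        rw [← Matrix.mul_nonsing_inv AL hALunit, Matrix.mul_apply, Matrix.mul_apply]
        exact Finset.sum_congr rfl fun b _ => by rw [hBrow b]
      show ML i j = _
      rw [hMLd, Matrix.mul_apply]
      calc ∑ a, (BL * AL⁻¹) i a * CL a j
          = ∑ a, (1 : Matrix (Fin k) (Fin k) (Localization.Away Δ)) t a * CL a j :=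
            Finset.sum_congr rfl fun a _ => by rw [hrow1 a]
        _ = ((1 : Matrix (Fin k) (Fin k) (Localization.Away Δ)) * CL) t j :=
            (Matrix.mul_apply).symm
        _ = CL t j := by rw [Matrix.one_mul]
        _ = aP (X ⟨(i, j), Or.inl hp⟩) := by
            show aP (X ⟨(rI t, j), _⟩) = aP (X ⟨(i, j), _⟩)
            exact congrArg aP (congrArg X (Subtype.ext
              (show (rI t, j) = (i, j) by rw [ht])))
    · obtain ⟨s, hs⟩ : ∃ s, cJ s = j :=
        ⟨(J.orderIsoOfFin hJ).symm ⟨j, hp⟩, by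
          show ((J.orderIsoOfFin hJ) ((J.orderIsoOfFin hJ).symm ⟨j, hp⟩) : Fin m) = j
          rw [OrderIso.apply_symm_apply]⟩
      have hCcol : ∀ a, CL a j = AL a s := by
        intro a
        show aP (X ⟨(rI a, j), _⟩) = aP (X ⟨(rI a, cJ s), _⟩)
        exact congrArg aP (congrArg X (Subtype.ext
          (show (rI a, j) = (rI a, cJ s) by rw [hs])))
      have hcol1 : ∀ b, (AL⁻¹ * CL) b j = (1 : Matrix (Fin k) (Fin k) (Localization.Away Δ)) b s := by
        intro b
        rw [← Matrix.nonsing_inv_mul AL hALunit, Matrix.mul_apply, Matrix.mul_apply]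
        exact Finset.sum_congr rfl fun a _ => by rw [hCcol a]
      show ML i j = _
      rw [hMLd, Matrix.mul_assoc, Matrix.mul_apply]
      calc ∑ b, BL i b * (AL⁻¹ * CL) b j
          = ∑ b, BL i b * (1 : Matrix (Fin k) (Fin k) (Localization.Away Δ)) b s :=
            Finset.sum_congr rfl fun b _ => by rw [hcol1 b]
        _ = (BL * (1 : Matrix (Fin k) (Fin k) (Localization.Away Δ))) i s :=
            (Matrix.mul_apply).symm
        _ = BL i s := by rw [Matrix.mul_one]
        _ = aP (X ⟨(i, j), Or.inr hp⟩) := by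
            show aP (X ⟨(i, cJ s), _⟩) = aP (X ⟨(i, j), _⟩)
            exact congrArg aP (congrArg X (Subtype.ext
              (show (i, cJ s) = (i, j) by rw [hs])))
  -- φ kills all (k+1)-minors
  have hφminor : ∀ (A' B' : Finset (Fin m)) (hA' : A'.card = k+1) (hB' : B'.card = k+1),
      φ (genMinor K m (k+1) A' B' hA' hB') = 0 := by
    intro A' B' hA' hB'
    rw [genMinor, RingHom.map_det]
    have h2 : (RingHom.mapMatrix φ) (Matrix.of fun a b : Fin (k+1) =>
        (X ((↑(A'.orderIsoOfFin hA' a) : Fin m), (↑(B'.orderIsoOfFin hB' b) : Fin m)) :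
          MvPolynomial (Fin m × Fin m) K))
        = ML.submatrix (fun a => (↑(A'.orderIsoOfFin hA' a) : Fin m))
            (fun b => (↑(B'.orderIsoOfFin hB' b) : Fin m)) := by
      refine Matrix.ext fun a b => ?_
      show φ (X _) = _
      rw [hφX]
      rfl
    rw [h2, hMLd]
    rw [Matrix.submatrix_mul _ _ _ id _ Function.bijective_id,
        Matrix.submatrix_mul _ _ _ id _ Function.bijective_id,
        Matrix.submatrix_id_id]
    exact det_rect_mul_zero _ _
  -- descend φ to the quotient
  have hker : ∀ q ∈ detIdeal K m (k+1), φ q = 0 := by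
    have hle : detIdeal K m (k+1) ≤ RingHom.ker φ := by
      rw [detIdeal, Ideal.span_le]
      rintro p ⟨A', B', hA', hB', rfl⟩
      exact RingHom.mem_ker.mpr (hφminor A' B' hA' hB')
    exact fun q hq => RingHom.mem_ker.mp (hle hq)
  set φb : DetRing K m k →+* Localization.Away Δ :=
    Ideal.Quotient.lift (detIdeal K m (k+1)) φ hker with hφbd
  have hφbmk : ∀ q, φb (mkq q) = φ q := fun q => Ideal.Quotient.lift_mk _ _ _
  -- φb ∘ g = aP
  have hφg : φb.comp g = aP := by
    apply MvPolynomial.ringHom_ext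
    · intro a
      show φb (g (MvPolynomial.C a)) = aP (MvPolynomial.C a)
      rw [hgmk]
      have : ρ (MvPolynomial.C a) = MvPolynomial.C a := by
        simp [hρd]
      rw [this, hφbmk, hφC]
    · intro p
      show φb (g (X p)) = aP (X p)
      rw [hgmk]
      have : ρ (X p) = X p.val := by
        simp [hρd]
      rw [this, hφbmk, hφX, hMS]
  have hφgapp : ∀ q, φb (g q) = aP q := fun q => RingHom.congr_fun hφg q
  have hunit2 : IsUnit (φb (g Δ)) := by
    rw [hφgapp]
    exact IsLocalization.Away.algebraMap_isUnit Δ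
  set ψ : Localization.Away (g Δ) →+* Localization.Away Δ :=
    IsLocalization.Away.lift (S := Localization.Away (g Δ)) (g Δ) hunit2 with hψd
  have hψaQ : ∀ q, ψ (aQ q) = φb q := fun q => IsLocalization.Away.lift_eq _ _ _
  -- defining property of f
  have hfaP : ∀ q, f (aP q) = aQ (g q) := by
    intro q
    show IsLocalization.Away.map _ _ g Δ (aP q) = aQ (g q)
    unfold IsLocalization.Away.map
    exact IsLocalization.map_eq _ _
  -- ψ ∘ f = id
  have hcomp1 : ψ.comp f = RingHom.id (Localization.Away Δ) := by
    refine IsLocalization.ringHom_ext (Submonoid.powers Δ) (RingHom.ext fun q => ?_)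
    show ψ (f (aP q)) = aP q
    rw [hfaP, hψaQ, hφgapp]
  -- the generic minor is nonzero
  have hΔR0 : ΔR ≠ 0 := by
    intro h0
    set v : Fin m × Fin m → K := fun p => if ∃ a : Fin k, p = (rI a, cJ a) then 1 else 0 with hv
    have hev : eval v ΔR = 1 := by
      rw [hΔRd, RingHom.map_det]
      have h1 : (RingHom.mapMatrix (eval v)) AR = (1 : Matrix (Fin k) (Fin k) K) := by
        refine Matrix.ext fun a b => ?_
        show eval v (X (rI a, cJ b)) = _
        rw [eval_X]
        simp only [hv]
        by_cases hab : a = b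
        · subst hab
          rw [Matrix.one_apply_eq, if_pos ⟨a, rfl⟩]
        · have hne : ¬ ∃ c : Fin k, ((rI a, cJ b) : Fin m × Fin m) = (rI c, cJ c) := by
            rintro ⟨c, hc⟩
            rw [Prod.mk.injEq] at hc
            exact hab ((hrIinj hc.1).trans (hcJinj hc.2).symm)
          rw [Matrix.one_apply_ne hab, if_neg hne]
      rw [h1, Matrix.det_one]
    rw [h0, map_zero] at hev
    exact zero_ne_one hev
  -- the adjugate identity over the localization
  have hNP : ∀ i j : Fin m, ML i j * aP Δ = aP ((BP * AP.adjugate * CP) i j) := by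
    intro i j
    have e1 : ML i j * AL.det = (BL * AL.adjugate * CL) i j :=
      entry_inv_mul_det BL AL CL i j hALunit
    have e2 : BL * AL.adjugate * CL = ((BP * AP.adjugate * CP).map aP) := by
      rw [Matrix.map_mul, Matrix.map_mul, hALd, hBLd, hCLd]
      congr 1
      congr 1
      have := RingHom.map_adjugate aP AP
      calc (AP.map aP).adjugate = ((RingHom.mapMatrix aP) AP).adjugate := rfl
        _ = (RingHom.mapMatrix aP) AP.adjugate := (RingHom.map_adjugate aP AP).symm
        _ = AP.adjugate.map aP := rfl
    rw [← hdetAL, e1, e2, Matrix.map_apply]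
  -- transport the adjugate matrix to R via ρ
  have hgNP : ∀ i j : Fin m, g ((BP * AP.adjugate * CP) i j) = mkq (NR i j) := by
    intro i j
    rw [hgmk]
    congr 1
    have hmapN : (BP * AP.adjugate * CP).map ρ = NR := by
      rw [Matrix.map_mul, Matrix.map_mul, hNRd]
      have hadj : AP.adjugate.map ρ = AR.adjugate := by
        calc AP.adjugate.map ρ = (RingHom.mapMatrix ρ) AP.adjugate := rfl
          _ = ((RingHom.mapMatrix ρ) AP).adjugate := RingHom.map_adjugate ρ AP
          _ = (AP.map ρ).adjugate := rfl
          _ = AR.adjugate := by rw [hAPmap]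
      rw [hadj, hBPmap, hCPmap]
    calc ρ ((BP * AP.adjugate * CP) i j) = ((BP * AP.adjugate * CP).map ρ) i j := rfl
      _ = NR i j := by rw [hmapN]
  -- the key congruence modulo the determinantal ideal
  have hkey : ∀ i j : Fin m, mkq (NR i j) = mkq (X (i, j) * ΔR) := by
    intro i j
    by_cases hi : i ∈ I
    · obtain ⟨t, ht⟩ : ∃ t, rI t = i :=
        ⟨(I.orderIsoOfFin hI).symm ⟨i, hi⟩, by
          show ((I.orderIsoOfFin hI) ((I.orderIsoOfFin hI).symm ⟨i, hi⟩) : Fin m) = i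
          rw [OrderIso.apply_symm_apply]⟩
      have hrow : ∀ b, BR i b = AR t b := fun b => by
        show (X (i, cJ b) : MvPolynomial (Fin m × Fin m) K) = X (rI t, cJ b)
        rw [ht]
      have h1 : NR i j = AR.det * CR t j := row_in_span BR AR CR i t hrow j
      have h2 : CR t j = X (i, j) := by
        show (X (rI t, j) : MvPolynomial (Fin m × Fin m) K) = X (i, j)
        rw [ht]
      rw [h1, h2, ← hΔRd, mul_comm]
    · by_cases hj : j ∈ J
      · obtain ⟨u, hu⟩ : ∃ u, cJ u = j :=
          ⟨(J.orderIsoOfFin hJ).symm ⟨j, hj⟩, by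
            show ((J.orderIsoOfFin hJ) ((J.orderIsoOfFin hJ).symm ⟨j, hj⟩) : Fin m) = j
            rw [OrderIso.apply_symm_apply]⟩
        have hcol : ∀ a, CR a j = AR a u := fun a => by
          show (X (rI a, j) : MvPolynomial (Fin m × Fin m) K) = X (rI a, cJ u)
          rw [hu]
        have h1 : NR i j = AR.det * BR i u := col_in_span BR AR CR j u hcol i
        have h2 : BR i u = X (i, j) := by
          show (X (i, cJ u) : MvPolynomial (Fin m × Fin m) K) = X (i, j)
          rw [hu]
        rw [h1, h2, ← hΔRd, mul_comm]
      · -- the generic case: bordered determinant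
        have hA' : (insert i I).card = k + 1 := by
          rw [Finset.card_insert_of_notMem hi, hI]
        have hB' : (insert j J).card = k + 1 := by
          rw [Finset.card_insert_of_notMem hj, hJ]
        set Bc : Matrix (Fin k) (Fin 1) (MvPolynomial (Fin m × Fin m) K) :=
          Matrix.of fun a _ => X (rI a, j) with hBcd
        set Cr : Matrix (Fin 1) (Fin k) (MvPolynomial (Fin m × Fin m) K) :=
          Matrix.of fun _ b => X (i, cJ b) with hCrd
        set FB : Matrix (Fin k ⊕ Fin 1) (Fin k ⊕ Fin 1) (MvPolynomial (Fin m × Fin m) K) :=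
          Matrix.fromBlocks AR Bc Cr (Matrix.of fun _ _ => X (i, j)) with hFBd
        have hdiff : FB.det = X (i, j) * ΔR - NR i j := by
          rw [hFBd, bordered_det_domain AR Bc Cr (X (i, j))
            (by rw [← hΔRd]; exact hΔR0), ← hΔRd]
          congr 1
        have hmem : FB.det ∈ detIdeal K m (k + 1) := by
          have hrowinj : Function.Injective (Sum.elim rI (fun _ : Fin 1 => i)) := by
            rintro (a | a) (b | b) h <;>
              simp only [Sum.elim_inl, Sum.elim_inr] at h
            · exact congrArg Sum.inl (hrIinj h)
            · exact absurd (show i ∈ I by rw [← h]; exact hrImem a) hi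
            · exact absurd (show i ∈ I by rw [h]; exact hrImem b) hi
            · exact congrArg Sum.inr (Subsingleton.elim a b)
          have hcolinj : Function.Injective (Sum.elim cJ (fun _ : Fin 1 => j)) := by
            rintro (a | a) (b | b) h <;>
              simp only [Sum.elim_inl, Sum.elim_inr] at h
            · exact congrArg Sum.inl (hcJinj h)
            · exact absurd (show j ∈ J by rw [← h]; exact hcJmem a) hj
            · exact absurd (show j ∈ J by rw [h]; exact hcJmem b) hj
            · exact congrArg Sum.inr (Subsingleton.elim a b)
          have hrowmem : ∀ s, Sum.elim rI (fun _ : Fin 1 => i) s ∈ insert i I := by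
            rintro (a | a)
            · exact Finset.mem_insert_of_mem (hrImem a)
            · exact Finset.mem_insert_self _ _
          have hcolmem : ∀ s, Sum.elim cJ (fun _ : Fin 1 => j) s ∈ insert j J := by
            rintro (a | a)
            · exact Finset.mem_insert_of_mem (hcJmem a)
            · exact Finset.mem_insert_self _ _
          obtain ⟨er, her⟩ := exists_reindex (by simp) (insert i I) hA' _ hrowinj hrowmem
          obtain ⟨ec, hec⟩ := exists_reindex (by simp) (insert j J) hB' _ hcolinj hcolmem
          set G : Matrix (Fin (k+1)) (Fin (k+1)) (MvPolynomial (Fin m × Fin m) K) :=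
            Matrix.of fun a b => X ((↑((insert i I).orderIsoOfFin hA' a) : Fin m),
              (↑((insert j J).orderIsoOfFin hB' b) : Fin m)) with hGd
          have hFBG : FB = G.submatrix er ec := by
            refine Matrix.ext fun s t => ?_
            show FB s t = G (er s) (ec t)
            have h1 : G (er s) (ec t) =
                X (Sum.elim rI (fun _ : Fin 1 => i) s, Sum.elim cJ (fun _ : Fin 1 => j) t) := by
              show (X ((↑((insert i I).orderIsoOfFin hA' (er s)) : Fin m),
                (↑((insert j J).orderIsoOfFin hB' (ec t)) : Fin m)) :
                  MvPolynomial (Fin m × Fin m) K) = _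
              rw [her s, hec t]
            rw [h1]
            rcases s with a | a <;> rcases t with b | b <;> rfl
          rw [hFBG]
          set σ : Equiv.Perm (Fin k ⊕ Fin 1) := ec.trans er.symm with hσd
          have hsub : G.submatrix er ec = (G.submatrix er er).submatrix _root_.id ⇑σ := by
            refine Matrix.ext fun s t => ?_
            show G (er s) (ec t) = G (er (_root_.id s)) (er (σ t))
            rw [hσd]
            show G (er s) (ec t) = G (er s) (er (er.symm (ec t)))
            rw [Equiv.apply_symm_apply]
          rw [hsub, Matrix.det_permute' σ (G.submatrix er er),
            Matrix.det_submatrix_equiv_self er G]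
          refine Ideal.mul_mem_left _ _ (Ideal.subset_span ?_)
          exact ⟨insert i I, insert j J, hA', hB', by rw [genMinor, hGd]⟩
        rw [hmkqd, Ideal.Quotient.mk_eq_mk_iff_sub_mem]
        have hsub : NR i j - X (i, j) * ΔR = -FB.det := by
          rw [hdiff]; ring
        rw [hsub]
        exact neg_mem hmem
  -- f sends ML entries to the variables
  have hfφ : ∀ p : Fin m × Fin m, f (ML p.1 p.2) = aQ (mkq (X p)) := by
    rintro ⟨i, j⟩
    have hu : IsUnit (aQ (g Δ)) :=
      IsLocalization.Away.algebraMap_isUnit (S := Localization.Away (g Δ)) (g Δ)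
    refine IsUnit.mul_right_cancel hu ?_
    calc f (ML i j) * aQ (g Δ)
        = f (ML i j) * f (aP Δ) := by rw [hfaP]
      _ = f (ML i j * aP Δ) := (RingHom.map_mul f _ _).symm
      _ = f (aP ((BP * AP.adjugate * CP) i j)) := by rw [hNP]
      _ = aQ (g ((BP * AP.adjugate * CP) i j)) := hfaP _
      _ = aQ (mkq (NR i j)) := by rw [hgNP]
      _ = aQ (mkq (X (i, j) * ΔR)) := by rw [hkey]
      _ = aQ (mkq (X (i, j))) * aQ (g Δ) := by
            rw [RingHom.map_mul mkq, ← hgΔ, RingHom.map_mul aQ]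
  -- f ∘ ψ = id
  have hcomp2 : f.comp ψ = RingHom.id (Localization.Away (g Δ)) := by
    refine IsLocalization.ringHom_ext (S := Localization.Away (g Δ)) (Submonoid.powers (g Δ))
      (Ideal.Quotient.ringHom_ext (MvPolynomial.ringHom_ext (fun a => ?_) (fun p => ?_)))
    · show f (ψ (aQ (mkq (MvPolynomial.C a)))) = aQ (mkq (MvPolynomial.C a))
      rw [hψaQ, hφbmk, hφC, hfaP]
      have : g (MvPolynomial.C a) = mkq (MvPolynomial.C a) := by
        rw [hgmk]
        congr 1
        simp [hρd]
      rw [this]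
    · show f (ψ (aQ (mkq (X p)))) = aQ (mkq (X p))
      rw [hψaQ, hφbmk, hφX, hfφ]
  have hli : ∀ z, ψ (f z) = z := fun z => RingHom.congr_fun hcomp1 z
  have hri : ∀ z, f (ψ z) = z := fun z => RingHom.congr_fun hcomp2 z
  exact ⟨fun x y hxy => by rw [← hli x, ← hli y, hxy], fun y => ⟨ψ y, hri y⟩⟩
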